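/- arXiv:2105.06031 — 2 statements merged into one kernel-verified Lean document; each statement's English description precedes it below -/
import Mathlib

section
/- Let m, k be positive integers with k ≤ m and let q ∈ (0,1). Then Σ_{l=1}^{k} (m choose l) q^l Σ_{m₁+⋯+m_l = k, mᵢ ≥ 1} (k choose m₁,…,m_l)² = k! q^k m!/(k!(m−k)!) · k! + O(q^{k−1} m^{k−1}), and in particular this sum is at most c₀·k!·q^k·m^k for any constant c₀ > 1 when qm is sufficiently large relative to k. -/
open Finset

/-- The moment sum Σ_{l=1}^k (m choose l) q^l Σ_{m₁+⋯+m_l = k, mᵢ ≥ 1} (k choose m₁,…,m_l)². -/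
noncomputable def momentSum (q : ℝ) (k m : ℕ) : ℝ :=
  ∑ l ∈ Finset.Icc 1 k, (m.choose l : ℝ) * q ^ l *
    ∑ t ∈ (Finset.Nat.antidiagonalTuple l k).filter (fun t => ∀ i, 1 ≤ t i),
      ((Nat.multinomial Finset.univ t : ℝ)) ^ 2

lemma multinomial_one (k : ℕ) :
    Nat.multinomial (univ : Finset (Fin k)) (fun _ => 1) = k.factorial := by
  have h := Nat.multinomial_spec (univ : Finset (Fin k)) (fun _ => 1)
  simpa using h

lemma antidiag_filter_eq (k : ℕ) :
    (Finset.Nat.antidiagonalTuple k k).filter (fun t => ∀ i, 1 ≤ t i)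
      = {fun _ => 1} := by
  ext t
  simp only [Finset.mem_filter, Finset.Nat.mem_antidiagonalTuple, Finset.mem_singleton]
  constructor
  · rintro ⟨hsum, hge⟩
    funext i
    have h1 : ∀ i ∈ (univ : Finset (Fin k)), 1 ≤ t i := fun i _ => hge i
    have h2 : (∑ i : Fin k, (1:ℕ)) = ∑ i : Fin k, t i := by simp [hsum]
    exact ((Finset.sum_eq_sum_iff_of_le h1).mp h2 i (mem_univ i)).symm
  · rintro rfl; simp

/-- The moment sum equals (m choose k)·q^k·(k!)² up to O(q^{k−1} m^{k−1}), and in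
particular is at most c₀·k!·q^k·m^k for any c₀ > 1 once m is sufficiently large. -/
theorem moment_sum_estimate (k : ℕ) (hk : 1 ≤ k) (q : ℝ) (hq0 : 0 < q) (hq1 : q < 1) :
    (∃ C > 0, ∀ m : ℕ, k ≤ m →
      |momentSum q k m - (m.choose k : ℝ) * q ^ k * (Nat.factorial k : ℝ) ^ 2|
        ≤ C * q ^ (k - 1) * (m : ℝ) ^ (k - 1)) ∧
    (∀ c₀ : ℝ, 1 < c₀ → ∃ M : ℕ, ∀ m : ℕ, M ≤ m →
      momentSum q k m ≤ c₀ * (Nat.factorial k : ℝ) * q ^ k * (m : ℝ) ^ k) := by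
  set S : ℕ → ℝ := fun l =>
    ∑ t ∈ (Finset.Nat.antidiagonalTuple l k).filter (fun t => ∀ i, 1 ≤ t i),
      ((Nat.multinomial Finset.univ t : ℝ)) ^ 2 with hS
  have hSnonneg : ∀ l, 0 ≤ S l := fun l => Finset.sum_nonneg fun t _ => sq_nonneg _
  have hSk : S k = (k.factorial : ℝ) ^ 2 := by
    rw [hS]
    simp [antidiag_filter_eq k, multinomial_one k]
  have hIcc : Finset.Icc 1 k = insert k (Finset.Icc 1 (k - 1)) := by
    ext x
    simp only [Finset.mem_Icc, Finset.mem_insert]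
    omega
  have hknot : k ∉ Finset.Icc 1 (k - 1) := by
    simp only [Finset.mem_Icc]; omega
  have hsplit : ∀ m : ℕ, momentSum q k m
      = (m.choose k : ℝ) * q ^ k * (k.factorial : ℝ) ^ 2
        + ∑ l ∈ Finset.Icc 1 (k - 1), (m.choose l : ℝ) * q ^ l * S l := by
    intro m
    rw [momentSum, hIcc, Finset.sum_insert hknot]
    rw [← hSk]
  -- remainder bound
  set C : ℝ := ((∑ l ∈ Finset.Icc 1 (k - 1), S l) + 1) / q ^ (k - 1) with hC
  have hCpos : 0 < C := by
    apply div_pos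
    · have := Finset.sum_nonneg (fun l (_ : l ∈ Finset.Icc 1 (k-1)) => hSnonneg l)
      linarith
    · positivity
  have hR : ∀ m : ℕ, k ≤ m →
      ∑ l ∈ Finset.Icc 1 (k - 1), (m.choose l : ℝ) * q ^ l * S l
        ≤ C * q ^ (k - 1) * (m : ℝ) ^ (k - 1) := by
    intro m hm
    have hm1 : (1 : ℝ) ≤ (m : ℝ) := by exact_mod_cast le_trans hk hm
    have hstep : ∀ l ∈ Finset.Icc 1 (k - 1),
        (m.choose l : ℝ) * q ^ l * S l ≤ (m : ℝ) ^ (k - 1) * S l := by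
      intro l hl
      simp only [Finset.mem_Icc] at hl
      have h1 : (m.choose l : ℝ) ≤ (m : ℝ) ^ l := by
        exact_mod_cast Nat.choose_le_pow m l
      have h2 : ((m : ℝ)) ^ l ≤ (m : ℝ) ^ (k - 1) :=
        pow_le_pow_right₀ hm1 hl.2
      have h3 : q ^ l ≤ 1 := pow_le_one₀ hq0.le hq1.le
      calc (m.choose l : ℝ) * q ^ l * S l
          ≤ (m : ℝ) ^ (k - 1) * 1 * S l := by
            apply mul_le_mul_of_nonneg_right _ (hSnonneg l)
            apply mul_le_mul (h1.trans h2) h3 (by positivity) (by positivity)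
        _ = (m : ℝ) ^ (k - 1) * S l := by ring
    calc ∑ l ∈ Finset.Icc 1 (k - 1), (m.choose l : ℝ) * q ^ l * S l
        ≤ ∑ l ∈ Finset.Icc 1 (k - 1), (m : ℝ) ^ (k - 1) * S l :=
          Finset.sum_le_sum hstep
      _ = (∑ l ∈ Finset.Icc 1 (k - 1), S l) * (m : ℝ) ^ (k - 1) := by
          rw [Finset.sum_mul]; apply Finset.sum_congr rfl
          intros; ring
      _ ≤ ((∑ l ∈ Finset.Icc 1 (k - 1), S l) + 1) * (m : ℝ) ^ (k - 1) := by
          apply mul_le_mul_of_nonneg_right (by linarith) (by positivity)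
      _ = C * q ^ (k - 1) * (m : ℝ) ^ (k - 1) := by
          rw [hC]; field_simp
  have hRnonneg : ∀ m : ℕ,
      0 ≤ ∑ l ∈ Finset.Icc 1 (k - 1), (m.choose l : ℝ) * q ^ l * S l := by
    intro m
    apply Finset.sum_nonneg
    intro l _
    have := hSnonneg l
    positivity
  constructor
  · refine ⟨C, hCpos, fun m hm => ?_⟩
    rw [hsplit m]
    rw [abs_of_nonneg (by simpa using hRnonneg m)]
    simpa using hR m hm
  · intro c₀ hc₀
    set M : ℕ := max k (⌈C / ((c₀ - 1) * (k.factorial : ℝ) * q)⌉₊ + 1) with hM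
    refine ⟨M, fun m hm => ?_⟩
    have hmk : k ≤ m := le_trans (le_max_left _ _) hm
    have hm1 : (1 : ℝ) ≤ (m : ℝ) := by exact_mod_cast le_trans hk hmk
    have hfac : (0:ℝ) < (k.factorial : ℝ) := by exact_mod_cast k.factorial_pos
    have hCm : C ≤ (c₀ - 1) * (k.factorial : ℝ) * q * m := by
      have h1 : C / ((c₀ - 1) * (k.factorial : ℝ) * q) ≤ (m : ℝ) := by
        calc C / ((c₀ - 1) * (k.factorial : ℝ) * q)
            ≤ (⌈C / ((c₀ - 1) * (k.factorial : ℝ) * q)⌉₊ : ℝ) := Nat.le_ceil _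
          _ ≤ (M : ℝ) := by
              exact_mod_cast le_trans (Nat.le_succ _) (le_max_right _ _)
          _ ≤ (m : ℝ) := by exact_mod_cast hm
      have hd : 0 < (c₀ - 1) * (k.factorial : ℝ) * q := by
        apply mul_pos (mul_pos (by linarith) hfac) hq0
      calc C = C / ((c₀ - 1) * (k.factorial : ℝ) * q) * ((c₀ - 1) * (k.factorial : ℝ) * q) := by
              rw [div_mul_cancel₀ _ hd.ne']
        _ ≤ (m : ℝ) * ((c₀ - 1) * (k.factorial : ℝ) * q) :=
              mul_le_mul_of_nonneg_right h1 hd.le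
        _ = (c₀ - 1) * (k.factorial : ℝ) * q * m := by ring
    have hmain : (m.choose k : ℝ) * q ^ k * (k.factorial : ℝ) ^ 2
        ≤ (k.factorial : ℝ) * q ^ k * (m : ℝ) ^ k := by
      have h1 : (m.choose k : ℝ) ≤ (m : ℝ) ^ k / (k.factorial : ℝ) :=
        Nat.choose_le_pow_div k m
      have h2 : (m.choose k : ℝ) * (k.factorial : ℝ) ≤ (m : ℝ) ^ k := by
        rw [div_eq_mul_inv] at h1
        calc (m.choose k : ℝ) * (k.factorial : ℝ)
            ≤ (m : ℝ) ^ k * (k.factorial : ℝ)⁻¹ * (k.factorial : ℝ) :=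
              mul_le_mul_of_nonneg_right h1 hfac.le
          _ = (m : ℝ) ^ k := by field_simp
      have hq : (0:ℝ) ≤ q ^ k := by positivity
      calc (m.choose k : ℝ) * q ^ k * (k.factorial : ℝ) ^ 2
          = ((m.choose k : ℝ) * (k.factorial : ℝ)) * (k.factorial : ℝ) * q ^ k := by ring
        _ ≤ (m : ℝ) ^ k * (k.factorial : ℝ) * q ^ k := by
            apply mul_le_mul_of_nonneg_right (mul_le_mul_of_nonneg_right h2 hfac.le) hq
        _ = (k.factorial : ℝ) * q ^ k * (m : ℝ) ^ k := by ring
    have hrem : C * q ^ (k - 1) * (m : ℝ) ^ (k - 1)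
        ≤ (c₀ - 1) * (k.factorial : ℝ) * q ^ k * (m : ℝ) ^ k := by
      have hqk : q ^ k = q ^ (k - 1) * q := by
        rw [← pow_succ]
        congr 1
        omega
      have hmk' : (m : ℝ) ^ k = (m : ℝ) ^ (k - 1) * (m : ℝ) := by
        rw [← pow_succ]
        congr 1
        omega
      calc C * q ^ (k - 1) * (m : ℝ) ^ (k - 1)
          ≤ ((c₀ - 1) * (k.factorial : ℝ) * q * m) * q ^ (k - 1) * (m : ℝ) ^ (k - 1) := by
            apply mul_le_mul_of_nonneg_right
              (mul_le_mul_of_nonneg_right hCm (by positivity)) (by positivity)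
        _ = (c₀ - 1) * (k.factorial : ℝ) * q ^ k * (m : ℝ) ^ k := by
            rw [hqk, hmk']; ring
    calc momentSum q k m
        = (m.choose k : ℝ) * q ^ k * (k.factorial : ℝ) ^ 2
          + ∑ l ∈ Finset.Icc 1 (k - 1), (m.choose l : ℝ) * q ^ l * S l := hsplit m
      _ ≤ (k.factorial : ℝ) * q ^ k * (m : ℝ) ^ k
          + (c₀ - 1) * (k.factorial : ℝ) * q ^ k * (m : ℝ) ^ k :=
            add_le_add hmain ((hR m hmk).trans hrem)
      _ = c₀ * (k.factorial : ℝ) * q ^ k * (m : ℝ) ^ k := by ring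
end

section
/- Let X ~ Binom(m, α log n / n) with m = ρn for some fixed ρ > 0 and α = O(1), and let k_n = τ ρ log n for some τ ∈ (0, α]. Then for sufficiently large n, P(X ≤ k_n) = n^{−ρ(α − τ log(eα/τ) + o(1))}. -/
open Filter Real
open scoped Nat

private lemma fact_ge (k : ℕ) : ((k : ℝ) / Real.exp 1) ^ k ≤ (k ! : ℝ) := by
  have hk : (0:ℝ) ≤ k := Nat.cast_nonneg k
  have h1 : (k:ℝ) ^ k / k ! ≤ Real.exp k := by
    refine le_trans ?_ (Real.sum_le_exp_of_nonneg hk (k+1))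
    exact Finset.single_le_sum (f := fun i => (k:ℝ)^i / i !)
      (fun i _ => by positivity) (Finset.self_mem_range_succ k)
  have hek : Real.exp 1 ^ k = Real.exp k := by
    rw [← Real.exp_nat_mul]; ring_nf
  have hf : (0:ℝ) < k ! := by exact_mod_cast k.factorial_pos
  rw [div_pow, hek, div_le_iff₀ (Real.exp_pos _)]
  rw [div_le_iff₀ hf] at h1
  nlinarith [Real.exp_pos (k:ℝ), hf]

private lemma fact_le : ∀ k : ℕ, 1 ≤ k → (k ! : ℝ) ≤ Real.exp 1 * k * ((k : ℝ) / Real.exp 1) ^ k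
  | 0, h => by omega
  | 1, _ => by
      norm_num [Nat.factorial]
  | (k+2), _ => by
      have IH := fact_le (k+1) (by omega)
      set K : ℝ := ((k+1 : ℕ) : ℝ) with hK
      have hKpos : (0:ℝ) < K := by positivity
      have hexp := Real.exp_pos 1
      have key : Real.exp 1 ≤ ((K+1)/K) ^ (k+2) := by
        have h1 : 1 - ((K+1)/K)⁻¹ ≤ Real.log ((K+1)/K) :=
          Real.one_sub_inv_le_log_of_pos (by positivity)
        have h2 : 1 - ((K+1)/K)⁻¹ = 1/(K+1) := by
          rw [inv_div]; field_simp; ring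
        have h4 : ((K+1)/K) ^ (k+2) = Real.exp (((k+2:ℕ):ℝ) * Real.log ((K+1)/K)) := by
          rw [Real.exp_nat_mul, Real.exp_log (by positivity)]
        rw [h4]
        have h5 : ((k+2:ℕ):ℝ) * (1/(K+1)) = 1 := by
          rw [hK]; push_cast; field_simp; ring
        nth_rewrite 1 [← Real.exp_one_rpow 1]
        rw [Real.exp_one_rpow]
        apply Real.exp_le_exp.2
        calc (1:ℝ) = ((k+2:ℕ):ℝ) * (1/(K+1)) := h5.symm
          _ ≤ ((k+2:ℕ):ℝ) * Real.log ((K+1)/K) := by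
              apply mul_le_mul_of_nonneg_left (by linarith [h1, h2.symm ▸ h1]) (by positivity)
      have hcast : ((k+2 : ℕ)! : ℝ) = (K+1) * ((k+1 : ℕ)! : ℝ) := by
        rw [Nat.factorial_succ]; push_cast [hK]; ring
      have hc2 : (((k+2:ℕ)) : ℝ) = K + 1 := by push_cast [hK]; ring
      rw [hcast, hc2]
      have step1 : (K+1) * ((k+1 : ℕ)! : ℝ) ≤ (K+1) * (Real.exp 1 * K * (K / Real.exp 1)^(k+1)) :=
        mul_le_mul_of_nonneg_left IH (by positivity)
      refine step1.trans ?_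
      have e2 : (K+1) * (Real.exp 1 * K * (K / Real.exp 1)^(k+1))
          = Real.exp 1 * (K+1) * (Real.exp 1 * (K / Real.exp 1)^(k+2)) := by
        have h : Real.exp 1 * (K / Real.exp 1) = K := by field_simp
        rw [pow_succ]
        linear_combination (-((K+1) * Real.exp 1 * (K/Real.exp 1)^(k+1))) * h
      have e3 : Real.exp 1 * (K / Real.exp 1)^(k+2) ≤ ((K+1)/K)^(k+2) * (K / Real.exp 1)^(k+2) :=
        mul_le_mul_of_nonneg_right key (by positivity)
      have e4 : ((K+1)/K)^(k+2) * (K / Real.exp 1)^(k+2) = ((K+1) / Real.exp 1) ^ (k+2) := by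
        rw [← mul_pow]; congr 1; field_simp
      rw [e2]
      calc Real.exp 1 * (K+1) * (Real.exp 1 * (K / Real.exp 1)^(k+2))
          ≤ Real.exp 1 * (K+1) * (((K+1)/K)^(k+2) * (K / Real.exp 1)^(k+2)) :=
            mul_le_mul_of_nonneg_left e3 (by positivity)
        _ = Real.exp 1 * (K+1) * ((K+1) / Real.exp 1) ^ (k+2) := by rw [e4]

private lemma pow_div_fact_mono {B : ℝ} (hB : 0 ≤ B) :
    ∀ k j : ℕ, j ≤ k → (k : ℝ) ≤ B → B ^ j / j ! ≤ B ^ k / k !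
  | 0, j, hj, _ => by interval_cases j; simp
  | (k+1), j, hj, hkB => by
      rcases Nat.eq_or_lt_of_le hj with rfl | hj'
      · exact le_rfl
      · have hj'' : j ≤ k := by omega
        have hkB' : (k : ℝ) ≤ B := le_trans (by push_cast; linarith) hkB
        refine (pow_div_fact_mono hB k j hj'' hkB').trans ?_
        rw [pow_succ, Nat.factorial_succ]
        have hk1 : ((k:ℝ)+1) ≤ B := by push_cast at hkB ⊢; linarith
        have hfp : (0:ℝ) < (k ! : ℝ) := by exact_mod_cast k.factorial_pos
        rw [div_le_div_iff₀ hfp (by positivity)]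
        push_cast
        have : B ^ k * ((k:ℝ)+1) ≤ B ^ k * B := by
          apply mul_le_mul_of_nonneg_left hk1 (by positivity)
        nlinarith [pow_nonneg hB k, hfp]

private lemma tendsto_log_nat : Tendsto (fun n : ℕ => Real.log n) atTop atTop :=
  Real.tendsto_log_atTop.comp tendsto_natCast_atTop_atTop

private lemma tendsto_log_div_nat : Tendsto (fun n : ℕ => Real.log n / n) atTop (nhds 0) := by
  have h := (Real.tendsto_pow_log_div_mul_add_atTop 1 0 1 one_ne_zero).comp
    tendsto_natCast_atTop_atTop
  simpa [Function.comp_def] using h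

private lemma tendsto_logsq_div_nat : Tendsto (fun n : ℕ => (Real.log n)^2 / n) atTop (nhds 0) := by
  have h := (Real.tendsto_pow_log_div_mul_add_atTop 1 0 2 one_ne_zero).comp
    tendsto_natCast_atTop_atTop
  simpa [Function.comp_def] using h

private lemma tendsto_log_affine (a b : ℝ) (ha : 0 < a) :
    Tendsto (fun x : ℝ => Real.log (a * x + b) / x) atTop (nhds 0) := by
  have hinner : Tendsto (fun x : ℝ => a * x + b) atTop atTop :=
    (tendsto_id.const_mul_atTop ha).atTop_add tendsto_const_nhds
  have h1 : Tendsto (fun x : ℝ => Real.log (a * x + b) / (a * x + b)) atTop (nhds 0) := by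
    have h := (Real.tendsto_pow_log_div_mul_add_atTop 1 0 1 one_ne_zero).comp hinner
    simpa [Function.comp_def] using h
  have h2 : Tendsto (fun x : ℝ => (a * x + b) / x) atTop (nhds a) := by
    have hb : Tendsto (fun x : ℝ => b * x⁻¹) atTop (nhds (b * 0)) :=
      tendsto_const_nhds.mul tendsto_inv_atTop_zero
    have hsum : Tendsto (fun x : ℝ => a + b * x⁻¹) atTop (nhds (a + b * 0)) :=
      tendsto_const_nhds.add hb
    rw [mul_zero, add_zero] at hsum
    refine hsum.congr' ?_
    filter_upwards [eventually_ne_atTop (0:ℝ)] with x hx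
    field_simp
  have := h1.mul h2
  rw [zero_mul] at this
  refine this.congr' ?_
  filter_upwards [eventually_gt_atTop (0:ℝ), hinner.eventually (eventually_gt_atTop (0:ℝ))]
    with x hx hax
  field_simp

set_option maxHeartbeats 3000000 in
/-- Binomial tail bound: for X ~ Binom(m, α log n / n) with m = ρn and
k_n = τρ log n, P(X ≤ k_n) = n^{−ρ(α − τ log(eα/τ) + o(1))}. -/
theorem binomial_tail_asymptotics (ρ α τ : ℝ) (hρ : 0 < ρ) (hα : 0 < α)
    (hτ : τ ∈ Set.Ioc 0 α) (m : ℕ → ℕ) (hm : ∀ n, (m n : ℝ) = ρ * n) :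
    ∃ ε : ℕ → ℝ, Tendsto ε atTop (nhds 0) ∧
      ∀ᶠ n : ℕ in atTop,
        (∑ j ∈ Finset.range (⌊τ * ρ * Real.log n⌋₊ + 1),
            ((m n).choose j : ℝ) * (α * Real.log n / n) ^ j *
              (1 - α * Real.log n / n) ^ (m n - j))
          = (n : ℝ) ^ (-ρ * (α - τ * Real.log (Real.exp 1 * α / τ) + ε n)) := by
  obtain ⟨hτ0, hτα⟩ := hτ
  have hexp1 := Real.exp_pos 1
  set L : ℕ → ℝ := fun n => Real.log n with hLdef
  set k : ℕ → ℕ := fun n => ⌊τ * ρ * L n⌋₊ with hkdef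
  set P : ℕ → ℝ := fun n => α * L n / n with hPdef
  set S : ℕ → ℝ := fun n => ∑ j ∈ Finset.range (k n + 1),
      ((m n).choose j : ℝ) * P n ^ j * (1 - P n) ^ (m n - j) with hSdef
  have hLt : Tendsto L atTop atTop := tendsto_log_nat
  -- eventual basic facts
  have hEv : ∀ᶠ n : ℕ in atTop, 3 ≤ n ∧ 2 ≤ L n ∧ 0 < P n ∧ P n ≤ 1/2 ∧ 1 ≤ k n
      ∧ k n < m n ∧ (k n : ℝ) ≤ τ * ρ * L n ∧ (k n : ℝ) ≤ ρ * α * L n := by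
    have e1 : ∀ᶠ n : ℕ in atTop, 3 ≤ n := eventually_ge_atTop 3
    have e2 : ∀ᶠ n : ℕ in atTop, 2 ≤ L n := hLt.eventually_ge_atTop 2
    have e3 : ∀ᶠ n : ℕ in atTop, 1/(τ*ρ) ≤ L n := hLt.eventually_ge_atTop _
    have htP0 : Tendsto P atTop (nhds 0) := by
      have h := tendsto_log_div_nat.const_mul α
      rw [mul_zero] at h
      exact h.congr (fun n => by rw [hPdef]; ring)
    have e4 : ∀ᶠ n : ℕ in atTop, P n < 1/2 :=
      htP0.eventually_lt_const (by norm_num)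
    have e5 : ∀ᶠ n : ℕ in atTop, L n / n < 1/τ :=
      tendsto_log_div_nat.eventually_lt_const (by positivity)
    filter_upwards [e1, e2, e3, e4, e5] with n h1 h2 h3 h4 h5
    have hnR : (3:ℝ) ≤ n := by exact_mod_cast h1
    have hn0 : (0:ℝ) < n := by linarith
    have hL0 : (0:ℝ) < L n := by linarith
    have hτρL : (0:ℝ) ≤ τ*ρ*L n := by positivity
    have hkτ : (k n : ℝ) ≤ τ * ρ * L n := Nat.floor_le hτρL
    have hP0 : 0 < P n := by
      rw [hPdef]
      exact div_pos (mul_pos hα hL0) hn0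
    have hk1 : 1 ≤ k n := by
      rw [hkdef]
      apply Nat.le_floor
      rw [Nat.cast_one]
      rw [div_le_iff₀ (by positivity : (0:ℝ) < τ*ρ)] at h3
      linarith [h3]
    have hkm : k n < m n := by
      rw [div_lt_iff₀ hn0] at h5
      have h7 := mul_lt_mul_of_pos_left h5 (mul_pos hτ0 hρ)
      have h8 : τ * ρ * (1/τ * (n:ℝ)) = ρ * n := by field_simp
      have h6 : τ * ρ * L n < ρ * n := by
        calc τ * ρ * L n < τ * ρ * (1/τ * (n:ℝ)) := h7
          _ = ρ * n := h8
      have h9 : (k n : ℝ) < (m n : ℝ) := by rw [hm]; linarith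
      exact_mod_cast h9
    have hkB : (k n : ℝ) ≤ ρ * α * L n := by
      have : τ * ρ * L n ≤ ρ * α * L n := by nlinarith
      linarith
    exact ⟨h1, h2, hP0, h4.le, hk1, hkm, hkτ, hkB⟩
  -- exact identity m*P = ρ α L
  have hMP : ∀ n : ℕ, 1 ≤ n → (m n : ℝ) * P n = ρ * α * L n := by
    intro n hn
    have hn0 : (n:ℝ) ≠ 0 := by positivity
    rw [hPdef, hm]
    field_simp
  -- limits
  have htP : Tendsto P atTop (nhds 0) := by
    have := tendsto_log_div_nat.const_mul α
    rw [mul_zero] at this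
    exact this.congr (fun n => by rw [hPdef]; ring)
  have hinvL2 : Tendsto (fun n => 1 / L n) atTop (nhds 0) := by
    simpa [Pi.inv_def] using hLt.inv_tendsto_atTop
  have htk : Tendsto (fun n => (k n : ℝ) / L n) atTop (nhds (τ*ρ)) := by
    have hlo : Tendsto (fun n : ℕ => τ*ρ - 1/L n) atTop (nhds (τ*ρ - 0)) :=
      tendsto_const_nhds.sub hinvL2
    rw [sub_zero] at hlo
    refine tendsto_of_tendsto_of_tendsto_of_le_of_le' hlo tendsto_const_nhds ?_ ?_
    · filter_upwards [hEv] with n hn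
      obtain ⟨-, hL2, -, -, -, -, hkτ, -⟩ := hn
      have hL0 : (0:ℝ) < L n := by linarith
      have h1 : τ*ρ*L n - 1 < (k n:ℝ) := Nat.sub_one_lt_floor _
      have h2 := div_le_div_of_nonneg_right h1.le hL0.le
      have e : (τ*ρ*L n - 1)/L n = τ*ρ - 1/L n := by field_simp
      linarith [e ▸ h2]
    · filter_upwards [hEv] with n hn
      obtain ⟨-, hL2, -, -, -, -, hkτ, -⟩ := hn
      have hL0 : (0:ℝ) < L n := by linarith
      rw [div_le_iff₀ hL0]
      exact hkτ
  have htkP : Tendsto (fun n => (k n : ℝ) * P n) atTop (nhds 0) := by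
    have hub : Tendsto (fun n : ℕ => τ*ρ*α * ((L n)^2 / n)) atTop (nhds (τ*ρ*α * 0)) :=
      tendsto_const_nhds.mul tendsto_logsq_div_nat
    rw [mul_zero] at hub
    refine tendsto_of_tendsto_of_tendsto_of_le_of_le' tendsto_const_nhds hub ?_ ?_
    · filter_upwards [hEv] with n hn
      exact mul_nonneg (Nat.cast_nonneg _) hn.2.2.1.le
    · filter_upwards [hEv] with n hn
      obtain ⟨h3, hL2, hP0, -, -, -, hkτ, -⟩ := hn
      have hn0 : (0:ℝ) < n := by
        have : (3:ℝ) ≤ n := by exact_mod_cast h3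
        linarith
      have e : τ*ρ*α * ((L n)^2 / n) = (τ*ρ*L n) * (α * L n / n) := by
        field_simp
      rw [e]
      exact mul_le_mul_of_nonneg_right hkτ hP0.le
  have htLk : Tendsto (fun n => L n / k n) atTop (nhds (τ*ρ)⁻¹) := by
    have h := htk.inv₀ (by positivity)
    exact h.congr (fun n => by rw [inv_div])
  have hinvL : Tendsto (fun n => 1 / L n) atTop (nhds 0) := by
    simpa [Pi.inv_def] using hLt.inv_tendsto_atTop
  -- the log floor bound
  have htfloor : Tendsto (fun n => Real.log (τ*ρ*L n + 2) / L n) atTop (nhds 0) :=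
    (tendsto_log_affine (τ*ρ) 2 (by positivity)).comp hLt
  -- bounds
  set lower : ℕ → ℝ := fun n => (k n : ℝ) * Real.log (Real.exp 1 * ((ρ*α*L n - k n * P n) / k n))
      - (1 + Real.log (k n)) - ρ*α*L n / (1 - P n) with hlowdef
  set upper : ℕ → ℝ := fun n => Real.log ((k n : ℝ) + 1)
      + (k n : ℝ) * Real.log (Real.exp 1 * (ρ*α*L n / k n)) - (ρ*α*L n - k n * P n) with hupdef
  have hSpos : ∀ᶠ n : ℕ in atTop, 0 < S n := by
    filter_upwards [hEv] with n hn
    obtain ⟨h3, hL2, hP0, hPh, hk1, hkm, hkτ, hkB⟩ := hn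
    have hq0 : (0:ℝ) < 1 - P n := by linarith
    rw [hSdef]
    apply Finset.sum_pos'
    · intro j hj
      apply mul_nonneg (mul_nonneg (Nat.cast_nonneg _) (pow_nonneg hP0.le _))
      exact pow_nonneg hq0.le _
    · refine ⟨0, Finset.mem_range.2 (by omega), ?_⟩
      simp only [Nat.choose_zero_right, Nat.cast_one, pow_zero, one_mul, mul_one, Nat.sub_zero]
      exact pow_pos hq0 _
  have hlow : ∀ᶠ n : ℕ in atTop, lower n ≤ Real.log (S n) := by
    filter_upwards [hEv] with n hn
    obtain ⟨h3, hL2, hP0, hPh, hk1, hkm, hkτ, hkB⟩ := hn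
    have hn1 : (1:ℕ) ≤ n := by omega
    have hMPn := hMP n hn1
    have hq0 : (0:ℝ) < 1 - P n := by linarith
    have hkR : (1:ℝ) ≤ (k n : ℝ) := by exact_mod_cast hk1
    have hkR0 : (0:ℝ) < (k n : ℝ) := by linarith
    have hkmR : (k n:ℝ) + 1 ≤ (m n:ℝ) := by exact_mod_cast hkm
    have hMk : (0:ℝ) < (m n:ℝ) - k n := by linarith
    have hfk : (0:ℝ) < ((k n)! : ℝ) := by exact_mod_cast (k n).factorial_pos
    have hM0 : (0:ℝ) ≤ (m n : ℝ) := by linarith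
    have hchoose : ((m n:ℝ) - k n)^(k n) / ((k n)! : ℝ) ≤ ((m n).choose (k n) : ℝ) := by
      have h1 : (m n - k n)^(k n) ≤ (m n).descFactorial (k n) :=
        le_trans (Nat.pow_le_pow_left (by omega) _) (Nat.pow_sub_le_descFactorial _ _)
      rw [Nat.descFactorial_eq_factorial_mul_choose] at h1
      have hcast : ((m n - k n : ℕ) : ℝ) = (m n:ℝ) - k n := by
        rw [Nat.cast_sub hkm.le]
      rw [div_le_iff₀ hfk, ← hcast]
      calc (((m n - k n : ℕ)):ℝ)^(k n)
          ≤ (((k n)! * (m n).choose (k n) : ℕ) : ℝ) := by exact_mod_cast h1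
        _ = ((m n).choose (k n) : ℝ) * ((k n)! : ℝ) := by push_cast; ring
    have hMkP : (0:ℝ) < ((m n:ℝ) - k n) * P n := mul_pos hMk hP0
    have hTS : (((m n:ℝ) - k n) * P n)^(k n) / ((k n)!:ℝ) * (1 - P n) ^ (m n - k n) ≤ S n := by
      have hterm : (((m n:ℝ) - k n) * P n)^(k n) / ((k n)!:ℝ) * (1 - P n) ^ (m n - k n)
          ≤ ((m n).choose (k n) : ℝ) * P n ^ (k n) * (1 - P n) ^ (m n - k n) := by
        apply mul_le_mul_of_nonneg_right _ (pow_nonneg hq0.le _)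
        rw [mul_pow, mul_comm (((m n:ℝ) - k n)^(k n)) (P n ^ k n), mul_div_assoc]
        calc P n ^ k n * (((m n:ℝ) - k n)^(k n) / ((k n)!:ℝ))
            ≤ P n ^ k n * ((m n).choose (k n) : ℝ) :=
              mul_le_mul_of_nonneg_left hchoose (pow_nonneg hP0.le _)
          _ = ((m n).choose (k n) : ℝ) * P n ^ (k n) := mul_comm _ _
      refine hterm.trans ?_
      rw [hSdef]
      exact Finset.single_le_sum
        (f := fun j => ((m n).choose j : ℝ) * P n ^ j * (1 - P n) ^ (m n - j))
        (fun j _ => mul_nonneg (mul_nonneg (Nat.cast_nonneg _) (pow_nonneg hP0.le _))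
          (pow_nonneg hq0.le _))
        (Finset.self_mem_range_succ (k n))
    have hT'pos : (0:ℝ) < (((m n:ℝ) - k n) * P n)^(k n) / ((k n)!:ℝ) * (1 - P n) ^ (m n - k n) :=
      mul_pos (div_pos (pow_pos hMkP _) hfk) (pow_pos hq0 _)
    have hlogS := Real.log_le_log hT'pos hTS
    have hlogT : Real.log ((((m n:ℝ) - k n) * P n)^(k n) / ((k n)!:ℝ) * (1 - P n) ^ (m n - k n))
        = (k n:ℝ) * Real.log (((m n:ℝ) - k n) * P n) - Real.log ((k n)!:ℝ)
          + ((m n - k n : ℕ):ℝ) * Real.log (1 - P n) := by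
      rw [Real.log_mul (div_pos (pow_pos hMkP _) hfk).ne' (pow_pos hq0 _).ne',
          Real.log_div (pow_pos hMkP _).ne' hfk.ne', Real.log_pow, Real.log_pow]
    have hlogfact : Real.log ((k n)!:ℝ)
        ≤ 1 + Real.log (k n) + (k n:ℝ) * Real.log ((k n:ℝ)/Real.exp 1) := by
      have h1 := fact_le (k n) hk1
      have h2 := Real.log_le_log hfk h1
      rw [Real.log_mul (mul_pos hexp1 hkR0).ne' (pow_pos (div_pos hkR0 hexp1) _).ne',
          Real.log_mul hexp1.ne' hkR0.ne', Real.log_exp, Real.log_pow] at h2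
      linarith [h2]
    have hcomb : (k n:ℝ) * Real.log (((m n:ℝ) - k n) * P n)
          - (k n:ℝ) * Real.log ((k n:ℝ)/Real.exp 1)
        = (k n:ℝ) * Real.log (Real.exp 1 * ((ρ*α*L n - (k n:ℝ) * P n)/(k n:ℝ))) := by
      rw [← mul_sub, ← Real.log_div hMkP.ne' (div_pos hkR0 hexp1).ne']
      congr 2
      rw [show ((m n:ℝ) - k n) * P n = ρ*α*L n - (k n:ℝ)*P n from by linear_combination hMPn]
      field_simp
    have hcastMk : ((m n - k n : ℕ):ℝ) = (m n:ℝ) - (k n:ℝ) := by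
      rw [Nat.cast_sub hkm.le]
    have hlogq : Real.log (1 - P n) ≤ 0 := Real.log_nonpos hq0.le (by linarith)
    have htail : -(ρ*α*L n)/(1 - P n) ≤ ((m n - k n : ℕ):ℝ) * Real.log (1 - P n) := by
      rw [hcastMk]
      have h1 : (m n:ℝ) * Real.log (1 - P n) ≤ ((m n:ℝ) - k n) * Real.log (1 - P n) := by
        apply mul_le_mul_of_nonpos_right _ hlogq
        linarith
      have h2 : (m n:ℝ) * (1 - (1 - P n)⁻¹) ≤ (m n:ℝ) * Real.log (1 - P n) :=
        mul_le_mul_of_nonneg_left (Real.one_sub_inv_le_log_of_pos hq0) hM0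
      have h3 : (m n:ℝ) * (1 - (1 - P n)⁻¹) = -(ρ*α*L n)/(1 - P n) := by
        rw [← hMPn]
        field_simp
        ring
      linarith [h1, h2, h3]
    rw [hlogT] at hlogS
    rw [hlowdef]
    have hnegdiv : -(ρ*α*L n)/(1 - P n) = -(ρ*α*L n/(1 - P n)) := neg_div _ _
    linarith [hlogS, hlogfact, htail, hcomb]
  have hup : ∀ᶠ n : ℕ in atTop, Real.log (S n) ≤ upper n := by
    filter_upwards [hEv, hSpos] with n hn hSn
    obtain ⟨h3, hL2, hP0, hPh, hk1, hkm, hkτ, hkB⟩ := hn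
    have hn1 : (1:ℕ) ≤ n := by omega
    have hMPn := hMP n hn1
    have hq0 : (0:ℝ) < 1 - P n := by linarith
    have hkR : (1:ℝ) ≤ (k n : ℝ) := by exact_mod_cast hk1
    have hkR0 : (0:ℝ) < (k n : ℝ) := by linarith
    have hfk : (0:ℝ) < ((k n)! : ℝ) := by exact_mod_cast (k n).factorial_pos
    have hB0 : (0:ℝ) < ρ*α*L n := by
      have : (0:ℝ) < L n := by linarith
      positivity
    have hterm : ∀ j ∈ Finset.range (k n + 1),
        ((m n).choose j : ℝ) * P n ^ j * (1 - P n) ^ (m n - j)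
          ≤ (ρ*α*L n)^(k n) / ((k n)!:ℝ) * (1 - P n) ^ (m n - k n) := by
      intro j hj
      rw [Finset.mem_range] at hj
      have hjk : j ≤ k n := by omega
      have hfj : (0:ℝ) < (j ! : ℝ) := by exact_mod_cast j.factorial_pos
      have h1 : ((m n).choose j : ℝ) ≤ (m n:ℝ)^j / (j ! : ℝ) := by
        have h2 : j ! * (m n).choose j ≤ (m n)^j := by
          rw [← Nat.descFactorial_eq_factorial_mul_choose]
          exact Nat.descFactorial_le_pow _ _
        rw [le_div_iff₀ hfj]
        calc ((m n).choose j : ℝ) * (j ! : ℝ)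
            = ((j ! * (m n).choose j : ℕ) : ℝ) := by push_cast; ring
          _ ≤ (((m n)^j : ℕ):ℝ) := by exact_mod_cast h2
          _ = (m n:ℝ)^j := by push_cast; ring
      have h2 : (1 - P n) ^ (m n - j) ≤ (1 - P n) ^ (m n - k n) :=
        pow_le_pow_of_le_one hq0.le (by linarith) (Nat.sub_le_sub_left hjk _)
      have h4 : (ρ*α*L n)^j / (j ! : ℝ) ≤ (ρ*α*L n)^(k n) / ((k n)!:ℝ) :=
        pow_div_fact_mono hB0.le (k n) j hjk hkB
      calc ((m n).choose j : ℝ) * P n ^ j * (1 - P n) ^ (m n - j)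
          ≤ ((m n:ℝ)^j / (j ! : ℝ)) * P n ^ j * (1 - P n) ^ (m n - j) := by
            apply mul_le_mul_of_nonneg_right _ (pow_nonneg hq0.le _)
            exact mul_le_mul_of_nonneg_right h1 (pow_nonneg hP0.le _)
        _ ≤ ((m n:ℝ)^j / (j ! : ℝ)) * P n ^ j * (1 - P n) ^ (m n - k n) := by
            apply mul_le_mul_of_nonneg_left h2
            apply mul_nonneg (div_nonneg (pow_nonneg (Nat.cast_nonneg _) _) hfj.le)
              (pow_nonneg hP0.le _)
        _ = ((ρ*α*L n)^j / (j ! : ℝ)) * (1 - P n) ^ (m n - k n) := by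
            rw [div_mul_eq_mul_div, ← mul_pow, hMPn]
        _ ≤ (ρ*α*L n)^(k n) / ((k n)!:ℝ) * (1 - P n) ^ (m n - k n) :=
            mul_le_mul_of_nonneg_right h4 (pow_nonneg hq0.le _)
    have hSbound : S n ≤ ((k n:ℝ)+1) * ((ρ*α*L n)^(k n) / ((k n)!:ℝ) * (1 - P n) ^ (m n - k n)) := by
      rw [hSdef]
      have := Finset.sum_le_card_nsmul (Finset.range (k n + 1))
        (fun j => ((m n).choose j : ℝ) * P n ^ j * (1 - P n) ^ (m n - j))
        ((ρ*α*L n)^(k n) / ((k n)!:ℝ) * (1 - P n) ^ (m n - k n)) hterm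
      rw [Finset.card_range, nsmul_eq_mul] at this
      calc (∑ j ∈ Finset.range (k n + 1),
            ((m n).choose j : ℝ) * P n ^ j * (1 - P n) ^ (m n - j))
          ≤ ((k n + 1 : ℕ):ℝ) * ((ρ*α*L n)^(k n) / ((k n)!:ℝ) * (1 - P n) ^ (m n - k n)) := this
        _ = ((k n:ℝ)+1) * ((ρ*α*L n)^(k n) / ((k n)!:ℝ) * (1 - P n) ^ (m n - k n)) := by
            push_cast; ring
    have hlogS := Real.log_le_log hSn hSbound
    have hRpos : (0:ℝ) < (ρ*α*L n)^(k n) / ((k n)!:ℝ) * (1 - P n) ^ (m n - k n) :=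
      mul_pos (div_pos (pow_pos hB0 _) hfk) (pow_pos hq0 _)
    have hlogR : Real.log (((k n:ℝ)+1) * ((ρ*α*L n)^(k n) / ((k n)!:ℝ) * (1 - P n) ^ (m n - k n)))
        = Real.log ((k n:ℝ)+1) + ((k n:ℝ) * Real.log (ρ*α*L n) - Real.log ((k n)!:ℝ)
          + ((m n - k n : ℕ):ℝ) * Real.log (1 - P n)) := by
      rw [Real.log_mul (by positivity) hRpos.ne',
          Real.log_mul (div_pos (pow_pos hB0 _) hfk).ne' (pow_pos hq0 _).ne',
          Real.log_div (pow_pos hB0 _).ne' hfk.ne', Real.log_pow, Real.log_pow]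
    have hlogfact : (k n:ℝ) * Real.log ((k n:ℝ)/Real.exp 1) ≤ Real.log ((k n)!:ℝ) := by
      have h1 := fact_ge (k n)
      have h2 := Real.log_le_log (pow_pos (div_pos hkR0 hexp1) _) h1
      rw [Real.log_pow] at h2
      exact h2
    have hcomb : (k n:ℝ) * Real.log (ρ*α*L n) - (k n:ℝ) * Real.log ((k n:ℝ)/Real.exp 1)
        = (k n:ℝ) * Real.log (Real.exp 1 * (ρ*α*L n/(k n:ℝ))) := by
      rw [← mul_sub, ← Real.log_div hB0.ne' (div_pos hkR0 hexp1).ne']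
      congr 2
      field_simp
    have hcastMk : ((m n - k n : ℕ):ℝ) = (m n:ℝ) - (k n:ℝ) := by
      rw [Nat.cast_sub hkm.le]
    have htail : ((m n - k n : ℕ):ℝ) * Real.log (1 - P n) ≤ -(ρ*α*L n - (k n:ℝ) * P n) := by
      rw [hcastMk]
      have hkmR : (k n:ℝ) + 1 ≤ (m n:ℝ) := by exact_mod_cast hkm
      have h1 : Real.log (1 - P n) ≤ -(P n) := by
        have := Real.log_le_sub_one_of_pos hq0
        linarith
      have h2 : ((m n:ℝ) - k n) * Real.log (1 - P n) ≤ ((m n:ℝ) - k n) * (-(P n)) :=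
        mul_le_mul_of_nonneg_left h1 (by linarith)
      have h3 : ((m n:ℝ) - k n) * (-(P n)) = -(ρ*α*L n - (k n:ℝ) * P n) := by
        linear_combination -hMPn
      linarith [h2, h3]
    rw [hlogR] at hlogS
    rw [hupdef]
    linarith [hlogS, hlogfact, hcomb, htail]
  -- limit of the bounds
  set C : ℝ := τ*ρ*Real.log (Real.exp 1 * α / τ) - ρ*α with hCdef
  have hb : Tendsto (fun n => (ρ*α*L n - k n * P n) / k n) atTop (nhds (α/τ)) := by
    have h1 : Tendsto (fun n => ρ*α*(L n / k n) - P n) atTop (nhds (ρ*α*(τ*ρ)⁻¹ - 0)) :=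
      (tendsto_const_nhds.mul htLk).sub htP
    have e : ρ*α*(τ*ρ)⁻¹ - 0 = α/τ := by
      field_simp; ring
    rw [e] at h1
    refine h1.congr' ?_
    filter_upwards [hEv] with n hn
    have hk1 := hn.2.2.2.2.1
    have hk0 : ((k n : ℕ):ℝ) ≠ 0 := by
      have : (1:ℝ) ≤ (k n : ℝ) := by exact_mod_cast hk1
      linarith
    field_simp
  have hb' : Tendsto (fun n => ρ*α*L n / (k n : ℝ)) atTop (nhds (α/τ)) := by
    have h1 : Tendsto (fun n => ρ*α*(L n / k n)) atTop (nhds (ρ*α*(τ*ρ)⁻¹)) :=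
      tendsto_const_nhds.mul htLk
    have e : ρ*α*(τ*ρ)⁻¹ = α/τ := by field_simp
    rw [e] at h1
    exact h1.congr (fun n => (mul_div_assoc _ _ _).symm)
  have hub2 : Tendsto (fun n => (1 + Real.log (τ*ρ*L n + 2)) / L n) atTop (nhds 0) := by
    have h1 : Tendsto (fun n => 1 / L n + Real.log (τ*ρ*L n + 2) / L n) atTop (nhds (0+0)) :=
      hinvL.add htfloor
    rw [add_zero] at h1
    exact h1.congr (fun n => (add_div _ _ _).symm)
  have hmid : Tendsto (fun n => (1 + Real.log (k n)) / L n) atTop (nhds 0) := by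
    refine tendsto_of_tendsto_of_tendsto_of_le_of_le' tendsto_const_nhds hub2 ?_ ?_
    · filter_upwards [hEv] with n hn
      obtain ⟨-, hL2, -, -, hk1, -⟩ := hn
      have : (0:ℝ) ≤ Real.log (k n) := Real.log_nonneg (by exact_mod_cast hk1)
      apply div_nonneg (by linarith) (by linarith)
    · filter_upwards [hEv] with n hn
      obtain ⟨-, hL2, -, -, hk1, -, hkτ, -⟩ := hn
      apply div_le_div_of_nonneg_right _ (by linarith)
      have h1 : Real.log (k n) ≤ Real.log (τ*ρ*L n + 2) := by
        apply Real.log_le_log (by exact_mod_cast hk1)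
        linarith
      linarith
  have hfirst : Tendsto (fun n => Real.log ((k n : ℝ) + 1) / L n) atTop (nhds 0) := by
    refine tendsto_of_tendsto_of_tendsto_of_le_of_le' tendsto_const_nhds htfloor ?_ ?_
    · filter_upwards [hEv] with n hn
      obtain ⟨-, hL2, -, -, hk1, -⟩ := hn
      have h0 : (0:ℝ) ≤ Real.log ((k n:ℝ) + 1) := Real.log_nonneg (by
        have h : (0:ℝ) ≤ (k n:ℝ) := Nat.cast_nonneg _
        linarith)
      apply div_nonneg h0 (by linarith)
    · filter_upwards [hEv] with n hn
      obtain ⟨-, hL2, -, -, hk1, -, hkτ, -⟩ := hn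
      apply div_le_div_of_nonneg_right _ (by linarith)
      apply Real.log_le_log (by positivity)
      linarith
  have heατ : Real.exp 1 * (α/τ) ≠ 0 := by positivity
  have hlogb : Tendsto (fun n => Real.log (Real.exp 1 * ((ρ*α*L n - k n * P n) / k n)))
      atTop (nhds (Real.log (Real.exp 1 * α / τ))) := by
    have := (tendsto_const_nhds.mul hb).log heατ
    rw [show Real.exp 1 * (α/τ) = Real.exp 1 * α / τ by ring] at this
    exact this
  have hlogb' : Tendsto (fun n => Real.log (Real.exp 1 * (ρ*α*L n / k n)))
      atTop (nhds (Real.log (Real.exp 1 * α / τ))) := by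
    have := (tendsto_const_nhds.mul hb').log heατ
    rw [show Real.exp 1 * (α/τ) = Real.exp 1 * α / τ by ring] at this
    exact this
  have htlower : Tendsto (fun n => lower n / L n) atTop (nhds C) := by
    have h1 : Tendsto (fun n => (k n:ℝ)/L n * Real.log (Real.exp 1 * ((ρ*α*L n - k n*P n)/k n))
        - (1 + Real.log (k n))/L n - ρ*α/(1 - P n)) atTop
        (nhds ((τ*ρ) * Real.log (Real.exp 1 * α/τ) - 0 - ρ*α/(1-0))) :=
      ((htk.mul hlogb).sub hmid).sub
        (tendsto_const_nhds.div (tendsto_const_nhds.sub htP) (by norm_num))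
    have e : (τ*ρ) * Real.log (Real.exp 1 * α/τ) - 0 - ρ*α/(1-0) = C := by
      rw [hCdef]; norm_num
    rw [e] at h1
    refine h1.congr' ?_
    filter_upwards [hEv] with n hn
    obtain ⟨-, hL2, hP0, hPh, -⟩ := hn
    have hL0 : L n ≠ 0 := by linarith
    have hq0 : (1:ℝ) - P n ≠ 0 := by linarith
    rw [hlowdef]
    field_simp
  have htupper : Tendsto (fun n => upper n / L n) atTop (nhds C) := by
    have h1 : Tendsto (fun n => Real.log ((k n:ℝ)+1)/L n
        + (k n:ℝ)/L n * Real.log (Real.exp 1 * (ρ*α*L n/k n))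
        - (ρ*α - (k n:ℝ)*P n * (1/L n))) atTop
        (nhds (0 + (τ*ρ) * Real.log (Real.exp 1 * α/τ) - (ρ*α - 0 * 0))) :=
      (hfirst.add (htk.mul hlogb')).sub (tendsto_const_nhds.sub (htkP.mul hinvL))
    have e : 0 + (τ*ρ) * Real.log (Real.exp 1 * α/τ) - (ρ*α - 0 * 0) = C := by
      rw [hCdef]; norm_num
    rw [e] at h1
    refine h1.congr' ?_
    filter_upwards [hEv] with n hn
    obtain ⟨-, hL2, -⟩ := hn
    have hL0 : L n ≠ 0 := by linarith
    rw [hupdef]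
    field_simp
  have main : Tendsto (fun n => Real.log (S n) / L n) atTop (nhds C) := by
    refine tendsto_of_tendsto_of_tendsto_of_le_of_le' htlower htupper ?_ ?_
    · filter_upwards [hlow, hEv] with n h1 h2
      exact div_le_div_of_nonneg_right h1 (by linarith [h2.2.1])
    · filter_upwards [hup, hEv] with n h1 h2
      exact div_le_div_of_nonneg_right h1 (by linarith [h2.2.1])
  -- build ε and conclude
  set A : ℝ := α - τ * Real.log (Real.exp 1 * α / τ) with hAdef
  have hCA : C = -(ρ * A) := by rw [hCdef, hAdef]; ring
  refine ⟨fun n => -(Real.log (S n) / (ρ * L n)) - A, ?_, ?_⟩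
  · have h1 : Tendsto (fun n => -(Real.log (S n) / L n / ρ) - A) atTop (nhds (-(C/ρ) - A)) :=
      ((main.div_const ρ).neg).sub_const A
    have h2 : -(C/ρ) - A = 0 := by
      rw [hCA]; field_simp; ring
    rw [h2] at h1
    exact h1.congr (fun n => by rw [div_div, mul_comm (L n) ρ])
  · filter_upwards [hSpos, hEv] with n hS h2
    obtain ⟨h3, hL2, -⟩ := h2
    have hL0 : L n ≠ 0 := by linarith
    have hn0 : (0:ℝ) < n := by positivity
    have hexpo : -ρ * (α - τ * Real.log (Real.exp 1 * α / τ)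
        + (-(Real.log (S n) / (ρ * L n)) - A)) = Real.log (S n) / L n := by
      rw [hAdef]; field_simp; ring
    calc (∑ j ∈ Finset.range (⌊τ * ρ * Real.log n⌋₊ + 1),
            ((m n).choose j : ℝ) * (α * Real.log n / n) ^ j *
              (1 - α * Real.log n / n) ^ (m n - j))
        = S n := by rw [hSdef]
      _ = (n : ℝ) ^ (-ρ * (α - τ * Real.log (Real.exp 1 * α / τ)
            + (-(Real.log (S n) / (ρ * L n)) - A))) := by
          rw [hexpo, Real.rpow_def_of_pos hn0]
          show S n = Real.exp (L n * (Real.log (S n) / L n))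
          rw [mul_comm, div_mul_cancel₀ _ hL0, Real.exp_log hS]
end
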